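/- Let A and B be complex n×n matrices satisfying AB = ωBA where ω is not a root of unity. Then AB is nilpotent. -/

import Mathlib

open Polynomial Matrix

lemma eval_charpoly_eq_det {n : ℕ} (M : Matrix (Fin n) (Fin n) ℂ) (μ : ℂ) :
    (M.charpoly).eval μ = (μ • (1 : Matrix (Fin n) (Fin n) ℂ) - M).det := by
  rw [Matrix.charpoly, ← Polynomial.coe_evalRingHom, RingHom.map_det]
  congr 1
  ext i j
  by_cases hij : i = j
  · subst hij
    simp [Matrix.charmatrix_apply_eq, Matrix.one_apply]
  · simp [Matrix.charmatrix_apply_ne _ _ _ hij, Matrix.one_apply, hij]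

theorem AB_nilpotent (n : ℕ) (ω : ℂ) (hω : ∀ k : ℕ, 0 < k → ω ^ k ≠ 1)
    (A B : Matrix (Fin n) (Fin n) ℂ) (h : A * B = ω • (B * A)) :
    IsNilpotent (A * B) := by
  by_cases hω0 : ω = 0
  · exact ⟨1, by simpa [hω0] using h⟩
  set M := A * B with hM
  -- the key determinant identity: det(x•1 - AB) = det(x•1 - BA) for x ≠ 0
  have comm : ∀ x : ℂ, x ≠ 0 →
      (x • (1 : Matrix (Fin n) (Fin n) ℂ) - A * B).det = (x • 1 - B * A).det := by
    intro x hx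
    have e1 : x • (1 : Matrix (Fin n) (Fin n) ℂ) - A * B = x • (1 - A * (x⁻¹ • B)) := by
      rw [smul_sub]
      congr 1
      rw [Matrix.mul_smul, smul_smul, mul_inv_cancel₀ hx, one_smul]
    have e2 : x • (1 : Matrix (Fin n) (Fin n) ℂ) - B * A = x • (1 - (x⁻¹ • B) * A) := by
      rw [smul_sub]
      congr 1
      rw [Matrix.smul_mul, smul_smul, mul_inv_cancel₀ hx, one_smul]
    rw [e1, e2, Matrix.det_smul, Matrix.det_smul, Matrix.det_one_sub_mul_comm]
  -- if μ ≠ 0 is a root of the charpoly, so is ω⁻¹ * μ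
  have key : ∀ μ : ℂ, μ ≠ 0 → M.charpoly.IsRoot μ → M.charpoly.IsRoot (ω⁻¹ * μ) := by
    intro μ hμ hr
    have h1 : (μ • (1 : Matrix (Fin n) (Fin n) ℂ) - A * B).det = 0 := by
      rw [← eval_charpoly_eq_det]; exact hr
    have e3 : μ • (1 : Matrix (Fin n) (Fin n) ℂ) - A * B
        = ω • ((ω⁻¹ * μ) • (1 : Matrix (Fin n) (Fin n) ℂ) - B * A) := by
      rw [← hM, h, smul_sub, smul_smul, mul_inv_cancel_left₀ hω0]
    have h2 : ((ω⁻¹ * μ) • (1 : Matrix (Fin n) (Fin n) ℂ) - B * A).det = 0 := by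
      rw [e3, Matrix.det_smul] at h1
      exact (mul_eq_zero.mp h1).resolve_left (pow_ne_zero _ hω0)
    have hμ' : ω⁻¹ * μ ≠ 0 := mul_ne_zero (inv_ne_zero hω0) hμ
    have := (comm _ hμ').trans h2
    rwa [Polynomial.IsRoot, eval_charpoly_eq_det]
  -- hence every root of the charpoly is 0
  have hzero : ∀ μ : ℂ, M.charpoly.IsRoot μ → μ = 0 := by
    intro μ hr
    by_contra hμ
    have hne : M.charpoly ≠ 0 := M.charpoly_monic.ne_zero
    have hroots : ∀ k : ℕ, M.charpoly.IsRoot ((ω⁻¹) ^ k * μ) := by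
      intro k
      induction k with
      | zero => simpa using hr
      | succ k ih =>
        have := key _ (mul_ne_zero (pow_ne_zero _ (inv_ne_zero hω0)) hμ) ih
        rwa [← mul_assoc, ← pow_succ'] at this
    have hinj : Function.Injective (fun k : ℕ => (ω⁻¹) ^ k * μ) := by
      intro a b hab
      simp only at hab
      by_contra hne'
      wlog hlt : a < b generalizing a b
      · exact this hab.symm (Ne.symm hne') (by omega)
      have hωa : (ω⁻¹) ^ a ≠ 0 := pow_ne_zero _ (inv_ne_zero hω0)
      have : (ω⁻¹) ^ b = (ω⁻¹) ^ a := mul_right_cancel₀ hμ (by rw [hab])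
      have hb : (ω⁻¹) ^ (b - a) = 1 := by
        have := this
        rw [show b = (b - a) + a by omega, pow_add] at this
        exact mul_right_cancel₀ hωa (by rw [this, one_mul])
      rw [inv_pow] at hb
      exact hω (b - a) (by omega) (inv_eq_one.mp hb)
    have hsub : Set.range (fun k : ℕ => (ω⁻¹) ^ k * μ) ⊆ ↑M.charpoly.roots.toFinset := by
      rintro x ⟨k, rfl⟩
      exact Finset.mem_coe.mpr (Multiset.mem_toFinset.mpr
        ((Polynomial.mem_roots hne).mpr (hroots k)))
    exact Set.infinite_of_injective_forall_mem hinj (fun k => hsub ⟨k, rfl⟩)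
      (M.charpoly.roots.toFinset.finite_toSet)
  -- therefore the charpoly is X ^ (number of roots) and M is nilpotent
  have hsplit : M.charpoly.Splits := IsAlgClosed.splits _
  have hprod : M.charpoly = (M.charpoly.roots.map fun a => X - C a).prod :=
    (Polynomial.Splits.eq_prod_roots_of_monic hsplit M.charpoly_monic)
  have hX : M.charpoly = X ^ Multiset.card M.charpoly.roots := by
    conv_lhs => rw [hprod]
    have : (M.charpoly.roots.map fun a => X - C a) =
        Multiset.replicate (Multiset.card M.charpoly.roots) X := by
      rw [Multiset.eq_replicate]
      constructor
      · simp
      · intro p hp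
        obtain ⟨a, ha, rfl⟩ := Multiset.mem_map.mp hp
        rw [hzero a (Polynomial.isRoot_of_mem_roots ha)]
        simp
    rw [this, Multiset.prod_replicate]
  refine ⟨Multiset.card M.charpoly.roots, ?_⟩
  have := M.aeval_self_charpoly
  rwa [hX, map_pow, Polynomial.aeval_X] at this
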